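/- For invertible real n×n matrices A and P, the condition number satisfies κ(A P⁻¹) = σ_max(A P⁻¹)/σ_min(A P⁻¹) ≤ (ε⁻¹ ‖A − P‖_F + 1) · (‖P A⁻¹ − I‖_F + 1), provided ‖P⁻¹‖₂ ≤ ε⁻¹. -/

import Mathlib

open Matrix

/-- Operator 2-norm (largest singular value) of a real square matrix. -/
noncomputable def opNorm {n : ℕ} (M : Matrix (Fin n) (Fin n) ℝ) : ℝ :=
  ‖Matrix.toEuclideanCLM (𝕜 := ℝ) M‖

noncomputable def sigmaMax {n : ℕ} (M : Matrix (Fin n) (Fin n) ℝ) : ℝ := opNorm M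

/-- Smallest singular value of a real square matrix. -/
noncomputable def sigmaMin {n : ℕ} (M : Matrix (Fin n) (Fin n) ℝ) : ℝ :=
  ⨅ x : Metric.sphere (0 : EuclideanSpace ℝ (Fin n)) 1,
    ‖Matrix.toEuclideanCLM (𝕜 := ℝ) M x‖

/-- Frobenius norm of a real square matrix. -/
noncomputable def frobNorm {n : ℕ} (M : Matrix (Fin n) (Fin n) ℝ) : ℝ :=
  Real.sqrt (∑ i, ∑ j, (M i j) ^ 2)

lemma frobNorm_nonneg {n : ℕ} (M : Matrix (Fin n) (Fin n) ℝ) : 0 ≤ frobNorm M :=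
  Real.sqrt_nonneg _

lemma opNorm_nonneg {n : ℕ} (M : Matrix (Fin n) (Fin n) ℝ) : 0 ≤ opNorm M :=
  norm_nonneg _

lemma opNorm_mul_le {n : ℕ} (M N : Matrix (Fin n) (Fin n) ℝ) :
    opNorm (M * N) ≤ opNorm M * opNorm N := by
  unfold opNorm
  rw [_root_.map_mul]
  exact norm_mul_le _ _

lemma opNorm_one_le {n : ℕ} : opNorm (1 : Matrix (Fin n) (Fin n) ℝ) ≤ 1 := by
  unfold opNorm
  rw [_root_.map_one]
  exact ContinuousLinearMap.norm_id_le

lemma opNorm_le_frobNorm {n : ℕ} (M : Matrix (Fin n) (Fin n) ℝ) :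
    opNorm M ≤ frobNorm M := by
  refine ContinuousLinearMap.opNorm_le_bound _ (frobNorm_nonneg M) fun x => ?_
  have hx : (Matrix.toEuclideanCLM (𝕜 := ℝ) M) x =
      (WithLp.equiv 2 _).symm (M.mulVec ((WithLp.equiv 2 _) x)) := by
    apply (WithLp.equiv 2 _).injective
    simp [Matrix.ofLp_toEuclideanCLM]
  rw [hx]
  set v : Fin n → ℝ := (WithLp.equiv 2 _) x with hv
  have hnx : ‖x‖ = Real.sqrt (∑ j, (v j) ^ 2) := by
    rw [EuclideanSpace.norm_eq]
    congr 1
    refine Finset.sum_congr rfl fun j _ => ?_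
    rw [Real.norm_eq_abs, sq_abs]
    rfl
  have hny : ‖(WithLp.equiv 2 ((i : Fin n) → ℝ)).symm (M.mulVec v)‖ =
      Real.sqrt (∑ i, (M.mulVec v i) ^ 2) := by
    rw [EuclideanSpace.norm_eq]
    congr 1
    refine Finset.sum_congr rfl fun i _ => ?_
    rw [WithLp.equiv_symm_apply, PiLp.toLp_apply, Real.norm_eq_abs, sq_abs]
  rw [hny, hnx, frobNorm, ← Real.sqrt_mul (by positivity)]
  apply Real.sqrt_le_sqrt
  rw [Finset.sum_mul]
  refine Finset.sum_le_sum fun i _ => ?_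
  have hmv : (M *ᵥ v) i = ∑ j, M i j * v j := rfl
  rw [hmv]
  exact Finset.sum_mul_sq_le_sq_mul_sq _ _ _

theorem stmt18 {n : ℕ} (A P : Matrix (Fin n) (Fin n) ℝ)
    (hA : IsUnit A.det) (hP : IsUnit P.det)
    (ε : ℝ) (hε : 0 < ε) (hPinv : opNorm P⁻¹ ≤ ε⁻¹) :
    sigmaMax (A * P⁻¹) / sigmaMin (A * P⁻¹) ≤
      (ε⁻¹ * frobNorm (A - P) + 1) * (frobNorm (P * A⁻¹ - 1) + 1) := by
  have hRHS1 : (1 : ℝ) ≤ ε⁻¹ * frobNorm (A - P) + 1 := by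
    have := frobNorm_nonneg (A - P)
    nlinarith [inv_pos.mpr hε]
  have hc1 : (1 : ℝ) ≤ frobNorm (P * A⁻¹ - 1) + 1 := by
    have := frobNorm_nonneg (P * A⁻¹ - 1)
    linarith
  rcases Nat.eq_zero_or_pos n with hn | hn
  · subst hn
    have hM : sigmaMax (A * P⁻¹) = 0 := by
      have h0 : (Matrix.toEuclideanCLM (𝕜 := ℝ) (A * P⁻¹)) = 0 := by
        apply ContinuousLinearMap.ext
        intro x
        exact Subsingleton.elim _ _
      rw [sigmaMax, opNorm, h0, norm_zero]
    rw [hM, zero_div]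
    nlinarith
  · set M := A * P⁻¹ with hMdef
    have hεinv : (0 : ℝ) ≤ ε⁻¹ := le_of_lt (inv_pos.mpr hε)
    -- sigmaMax bound
    have hsplit : M = (A - P) * P⁻¹ + 1 := by
      rw [hMdef, sub_mul, Matrix.mul_nonsing_inv P hP, sub_add_cancel]
    have hmax : sigmaMax M ≤ ε⁻¹ * frobNorm (A - P) + 1 := by
      calc sigmaMax M = opNorm ((A - P) * P⁻¹ + 1) := by rw [← hsplit]; rfl
        _ ≤ opNorm ((A - P) * P⁻¹) + opNorm 1 := by
            unfold opNorm; rw [map_add]; exact norm_add_le _ _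
        _ ≤ opNorm (A - P) * opNorm P⁻¹ + 1 :=
            add_le_add (opNorm_mul_le _ _) opNorm_one_le
        _ ≤ frobNorm (A - P) * ε⁻¹ + 1 :=
            add_le_add (mul_le_mul (opNorm_le_frobNorm _) hPinv (opNorm_nonneg _)
              (frobNorm_nonneg _)) le_rfl
        _ = ε⁻¹ * frobNorm (A - P) + 1 := by ring
    -- inverse
    have hMinv : M⁻¹ = P * A⁻¹ := by
      rw [hMdef, Matrix.mul_inv_rev, Matrix.nonsing_inv_nonsing_inv P hP]
    set c : ℝ := frobNorm (P * A⁻¹ - 1) + 1 with hcdef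
    have hcpos : (0 : ℝ) < c := lt_of_lt_of_le one_pos hc1
    have hMinvle : opNorm M⁻¹ ≤ c := by
      calc opNorm M⁻¹ = opNorm ((P * A⁻¹ - 1) + 1) := by rw [hMinv, sub_add_cancel]
        _ ≤ opNorm (P * A⁻¹ - 1) + opNorm 1 := by
            unfold opNorm; rw [map_add]; exact norm_add_le _ _
        _ ≤ frobNorm (P * A⁻¹ - 1) + 1 := add_le_add (opNorm_le_frobNorm _) opNorm_one_le
    -- sigmaMin lower bound
    have hMinvM : M⁻¹ * M = 1 := Matrix.nonsing_inv_mul M (by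
      rw [hMdef, Matrix.det_mul]
      exact hA.mul ((Matrix.isUnit_nonsing_inv_det_iff).mpr hP))
    have hkey : ∀ x : Metric.sphere (0 : EuclideanSpace ℝ (Fin n)) 1,
        c⁻¹ ≤ ‖(Matrix.toEuclideanCLM (𝕜 := ℝ) M) x‖ := by
      intro x
      have hx1 : ‖(x : EuclideanSpace ℝ (Fin n))‖ = 1 := by
        have := x.2
        simp only [mem_sphere_iff_norm, sub_zero] at this
        exact this
      have h1 : (1 : ℝ) ≤ opNorm M⁻¹ * ‖(Matrix.toEuclideanCLM (𝕜 := ℝ) M) x‖ := by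
        have := ((Matrix.toEuclideanCLM (𝕜 := ℝ) M⁻¹)).le_opNorm
          ((Matrix.toEuclideanCLM (𝕜 := ℝ) M) x)
        have heq : (Matrix.toEuclideanCLM (𝕜 := ℝ) M⁻¹)
            ((Matrix.toEuclideanCLM (𝕜 := ℝ) M) x) = (x : EuclideanSpace ℝ (Fin n)) := by
          rw [← ContinuousLinearMap.comp_apply, ← ContinuousLinearMap.mul_def, ← _root_.map_mul,
            hMinvM, _root_.map_one, ContinuousLinearMap.one_apply]
        rw [heq, hx1] at this
        exact this
      have h2 : (1 : ℝ) ≤ c * ‖(Matrix.toEuclideanCLM (𝕜 := ℝ) M) x‖ :=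
        h1.trans (mul_le_mul_of_nonneg_right hMinvle (norm_nonneg _))
      rw [inv_eq_one_div, div_le_iff₀ hcpos, mul_comm]
      exact h2
    have : Nonempty (Metric.sphere (0 : EuclideanSpace ℝ (Fin n)) 1) := by
      refine ⟨⟨EuclideanSpace.single (⟨0, hn⟩ : Fin n) (1 : ℝ), ?_⟩⟩
      simp [mem_sphere_iff_norm, EuclideanSpace.norm_single]
    have hmin : c⁻¹ ≤ sigmaMin M := le_ciInf hkey
    have hminpos : 0 < sigmaMin M := lt_of_lt_of_le (inv_pos.mpr hcpos) hmin
    rw [div_le_iff₀ hminpos]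
    calc sigmaMax M ≤ (ε⁻¹ * frobNorm (A - P) + 1) := hmax
      _ = (ε⁻¹ * frobNorm (A - P) + 1) * (c * c⁻¹) := by
          rw [mul_inv_cancel₀ (ne_of_gt hcpos), mul_one]
      _ ≤ (ε⁻¹ * frobNorm (A - P) + 1) * (c * sigmaMin M) :=
          mul_le_mul_of_nonneg_left (mul_le_mul_of_nonneg_left hmin hcpos.le) (by linarith)
      _ = (ε⁻¹ * frobNorm (A - P) + 1) * c * sigmaMin M := by ring
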